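/- Fix n, k ≥ 1 and j ∈ {k+1,…,n+k}. The set NC^k_j(n+k) of non-crossing partitions of {1,…,n+k} whose block containing 1,…,k has smallest element greater than k equal to j is in natural bijection with the product NC(j−k−1) × NC^{k+1}(n+2k−j+1): the blocks partitioning {k+1,…,j−1} give a non-crossing partition of a (j−k−1)-element set, and the remaining blocks, partitioning {1,…,k, j, j+1,…,n+k} with 1,…,k,j in one block, give an element of NC^{k+1}(n+2k−j+1). Consequently NC^k(n+k) decomposes into NC^k_0(n+k) (partitions in which {1,…,k} is a whole block) together with the classes NC^k_j(n+k), j = k+1,…,n+k. -/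

import Mathlib

/-- A partition of `{0,…,n-1}` is non-crossing if no two distinct blocks cross. -/
def IsNonCrossing {n : ℕ} (ν : Finpartition (Finset.univ : Finset (Fin n))) : Prop :=
  ∀ B ∈ ν.parts, ∀ C ∈ ν.parts, B ≠ C →
    ∀ i ∈ B, ∀ k ∈ B, ∀ j ∈ C, ∀ l ∈ C, i < j → j < k → k < l → False

/-- The first `k` elements of `{0,…,n-1}` all lie in one block of the partition
(this is the defining condition of the class `NC^k`). -/
def FirstTogether {n : ℕ} (k : ℕ)
    (ν : Finpartition (Finset.univ : Finset (Fin n))) : Prop :=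
  ∃ B ∈ ν.parts, ∀ i : Fin n, (i : ℕ) < k → i ∈ B

/-- `R_ν(X₁,…,Xₙ) = ∏_{B ∈ ν} R_{|B|}(X_i : i ∈ B)`, the product of cumulant
functionals over the blocks of a partition (arguments in increasing order). -/
noncomputable def partCum {A : Type*} [Ring A] (R : (k : ℕ) → (Fin k → A) → ℂ)
    {n : ℕ} (X : Fin n → A)
    (ν : Finpartition (Finset.univ : Finset (Fin n))) : ℂ :=
  ∏ B ∈ ν.parts, R B.card (fun i => X (B.orderIsoOfFin rfl i).1)

/-- `R` is the family of free cumulant functionals of `τ` : the moment–cumulant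
formula `τ(X₁⋯Xₙ) = Σ_{ν ∈ NC(n)} R_ν(X₁,…,Xₙ)` holds. -/
def MomentCumulant {A : Type*} [Ring A] [Algebra ℂ A] (τ : A →ₗ[ℂ] ℂ)
    (R : (k : ℕ) → (Fin k → A) → ℂ) : Prop :=
  ∀ n : ℕ, 0 < n → ∀ X : Fin n → A,
    τ (List.ofFn X).prod =
      ∑ᶠ ν : {ν : Finpartition (Finset.univ : Finset (Fin n)) // IsNonCrossing ν},
        partCum R X ν.1

/-- `c^k` sums : `ncSum R Z k m = Σ_{ν ∈ NC^k(m)} R_ν(Z,…,Z)`. -/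
noncomputable def ncSum {A : Type*} [Ring A] (R : (k : ℕ) → (Fin k → A) → ℂ)
    (Z : A) (k m : ℕ) : ℂ :=
  ∑ᶠ ν : {ν : Finpartition (Finset.univ : Finset (Fin m)) //
      IsNonCrossing ν ∧ FirstTogether k ν},
    partCum R (fun _ => Z) ν.1

/-- `X` and `Y` are freely independent: all their mixed free cumulants vanish. -/
def FreeIndep {A : Type*} [Ring A] (R : (k : ℕ) → (Fin k → A) → ℂ)
    (X Y : A) : Prop :=
  ∀ k : ℕ, ∀ W : Fin k → A,
    (∀ i, W i = X ∨ W i = Y) → (∃ i j, W i ≠ W j) → R k W = 0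

/-- `ν` lies in the class `NC^k_j(m)` (here `j` is 1-indexed as in the paper,
so the corresponding element of `Fin m` is `j - 1`): the block of `ν`
containing the first `k` elements has `j` as its smallest element greater
than `k`. -/
def InClassJ {m : ℕ} (k j : ℕ)
    (ν : Finpartition (Finset.univ : Finset (Fin m))) : Prop :=
  ∃ B ∈ ν.parts, (∀ i : Fin m, (i : ℕ) < k → i ∈ B) ∧
    (∃ hj : j - 1 < m, (⟨j - 1, hj⟩ : Fin m) ∈ B) ∧
    ∀ i ∈ B, k ≤ (i : ℕ) → j - 1 ≤ (i : ℕ)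

namespace Stmt2Aux

open Finset

/-- Build a `Finpartition` of `univ` from a covering pairwise-disjoint family of
nonempty finsets. -/
def ofCover {α : Type*} [Fintype α] [DecidableEq α] (S : Finset (Finset α))
    (hdisj : ∀ P ∈ S, ∀ Q ∈ S, P ≠ Q → ∀ a, a ∈ P → a ∈ Q → False)
    (hcov : ∀ a : α, ∃ P ∈ S, a ∈ P)
    (hne : ∀ P ∈ S, P.Nonempty) : Finpartition (Finset.univ : Finset α) where
  parts := S
  supIndep := Finset.supIndep_iff_pairwiseDisjoint.mpr
    (fun P hP Q hQ hPQ => Finset.disjoint_left.mpr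
      (fun a hA hA' => (hdisj P hP Q hQ hPQ a hA hA').elim))
  sup_parts := by
    apply Finset.eq_univ_iff_forall.mpr
    intro a
    rw [Finset.mem_sup]
    exact hcov a
  bot_notMem := fun h => Finset.not_nonempty_empty (hne ⊥ h)

@[simp] lemma ofCover_parts {α : Type*} [Fintype α] [DecidableEq α]
    (S : Finset (Finset α)) (h1) (h2) (h3) : (ofCover S h1 h2 h3).parts = S := rfl

lemma finpartition_eq {α : Type*} [Lattice α] [OrderBot α] {a : α}
    {P Q : Finpartition a} (h : P.parts = Q.parts) : P = Q :=
  Finpartition.ext h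

variable {n k j : ℕ}

/-- Embedding of the middle interval. -/
def fM (h2 : j ≤ n + k) (t : Fin (j - k - 1)) : Fin (n + k) :=
  ⟨(t : ℕ) + k, by have := t.isLt; omega⟩

/-- Embedding of the complement of the middle interval. -/
def fC (hk : 1 ≤ k) (h1 : k + 1 ≤ j) (t : Fin (n + 2 * k - j + 1)) : Fin (n + k) :=
  ⟨if (t : ℕ) < k then (t : ℕ) else (t : ℕ) + (j - k - 1), by
    have := t.isLt; split_ifs <;> omega⟩

lemma fM_strictMono (h2 : j ≤ n + k) : StrictMono (fM (n := n) (k := k) h2) := by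
  intro a b hab
  simp only [fM, Fin.mk_lt_mk]
  have := (Fin.lt_def).mp hab
  omega

lemma fM_inj (h2 : j ≤ n + k) : Function.Injective (fM (n := n) (k := k) h2) :=
  (fM_strictMono h2).injective

lemma fC_strictMono (hk : 1 ≤ k) (h1 : k + 1 ≤ j) : StrictMono (fC (n := n) (k := k) hk h1) := by
  intro a b hab
  simp only [fC, Fin.mk_lt_mk]
  have := (Fin.lt_def).mp hab
  split <;> split <;> omega

lemma fC_inj (hk : 1 ≤ k) (h1 : k + 1 ≤ j) : Function.Injective (fC (n := n) (k := k) hk h1) :=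
  (fC_strictMono hk h1).injective

lemma fM_range (h2 : j ≤ n + k) (t : Fin (j - k - 1)) :
    k ≤ (fM h2 t : ℕ) ∧ (fM h2 t : ℕ) < j - 1 := by
  simp only [fM]
  have := t.isLt
  omega

lemma fC_range (hk : 1 ≤ k) (h1 : k + 1 ≤ j) (t : Fin (n + 2 * k - j + 1)) :
    (fC hk h1 t : ℕ) < k ∨ (j - 1 : ℕ) ≤ (fC hk h1 t : ℕ) := by
  simp only [fC]
  have := t.isLt
  split_ifs <;> omega

lemma fC_val_lt (hk : 1 ≤ k) (h1 : k + 1 ≤ j) (t : Fin (n + 2 * k - j + 1)) (h : (t : ℕ) < k) :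
    (fC hk h1 t : ℕ) = (t : ℕ) := by simp [fC, h]

lemma fC_val_ge (hk : 1 ≤ k) (h1 : k + 1 ≤ j) (t : Fin (n + 2 * k - j + 1)) (h : k ≤ (t : ℕ)) :
    (fC hk h1 t : ℕ) = (t : ℕ) + (j - k - 1) := by
  simp only [fC]
  rw [if_neg (by omega)]

lemma exists_fM (h2 : j ≤ n + k) {i : Fin (n + k)}
    (h : k ≤ (i : ℕ) ∧ (i : ℕ) < j - 1) : ∃ t, fM h2 t = i := by
  refine ⟨⟨(i : ℕ) - k, by omega⟩, ?_⟩
  apply Fin.ext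
  simp only [fM]
  omega

lemma exists_fC (hk : 1 ≤ k) (h1 : k + 1 ≤ j) (h2 : j ≤ n + k) {i : Fin (n + k)}
    (h : (i : ℕ) < k ∨ (j - 1 : ℕ) ≤ (i : ℕ)) : ∃ t, fC hk h1 t = i := by
  have hi := i.isLt
  rcases h with h | h
  · refine ⟨⟨(i : ℕ), by omega⟩, ?_⟩
    apply Fin.ext
    simp only [fC]
    rw [if_pos (by omega)]
  · refine ⟨⟨(i : ℕ) - (j - k - 1), by omega⟩, ?_⟩
    apply Fin.ext
    simp only [fC]
    rw [if_neg (by omega)]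
    omega


section Decode

variable (hk : 1 ≤ k) (h1 : k + 1 ≤ j) (h2 : j ≤ n + k)

/-- Reassemble a partition of `Fin (n+k)` from a partition of the middle
interval and a partition of its complement. -/
def decode (μ : Finpartition (Finset.univ : Finset (Fin (j - k - 1))))
    (ρ : Finpartition (Finset.univ : Finset (Fin (n + 2 * k - j + 1)))) :
    Finpartition (Finset.univ : Finset (Fin (n + k))) :=
  ofCover (μ.parts.image (Finset.image (fM h2)) ∪ ρ.parts.image (Finset.image (fC hk h1)))
    (by
      intro P hP Q hQ hPQ a haP haQ
      simp only [Finset.mem_union, Finset.mem_image] at hP hQ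
      rcases hP with ⟨B, hB, rfl⟩ | ⟨B, hB, rfl⟩ <;>
        rcases hQ with ⟨C, hC, rfl⟩ | ⟨C, hC, rfl⟩ <;>
          simp only [Finset.mem_image] at haP haQ
      · obtain ⟨t, ht, rfl⟩ := haP
        obtain ⟨s, hs, hst⟩ := haQ
        obtain rfl := fM_inj h2 hst
        exact hPQ (by rw [μ.eq_of_mem_parts hB hC ht hs])
      · obtain ⟨t, ht, rfl⟩ := haP
        obtain ⟨s, hs, hst⟩ := haQ
        have r1 := fM_range h2 t
        have r2 := fC_range hk h1 s
        rw [hst] at r2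
        omega
      · obtain ⟨t, ht, rfl⟩ := haP
        obtain ⟨s, hs, hst⟩ := haQ
        have r1 := fC_range hk h1 t
        have r2 := fM_range h2 s
        rw [hst] at r2
        omega
      · obtain ⟨t, ht, rfl⟩ := haP
        obtain ⟨s, hs, hst⟩ := haQ
        obtain rfl := fC_inj hk h1 hst
        exact hPQ (by rw [ρ.eq_of_mem_parts hB hC ht hs]))
    (by
      intro a
      by_cases ha : k ≤ (a : ℕ) ∧ (a : ℕ) < j - 1
      · obtain ⟨t, rfl⟩ := exists_fM h2 ha
        obtain ⟨B, hB, htB⟩ := μ.exists_mem (Finset.mem_univ t)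
        exact ⟨B.image (fM h2),
          Finset.mem_union_left _ (Finset.mem_image_of_mem _ hB),
          Finset.mem_image_of_mem _ htB⟩
      · have ha' : (a : ℕ) < k ∨ (j - 1 : ℕ) ≤ (a : ℕ) := by omega
        obtain ⟨t, rfl⟩ := exists_fC hk h1 h2 (i := a) ha'
        obtain ⟨B, hB, htB⟩ := ρ.exists_mem (Finset.mem_univ t)
        exact ⟨B.image (fC hk h1),
          Finset.mem_union_right _ (Finset.mem_image_of_mem _ hB),
          Finset.mem_image_of_mem _ htB⟩)
    (by
      intro P hP
      simp only [Finset.mem_union, Finset.mem_image] at hP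
      rcases hP with ⟨B, hB, rfl⟩ | ⟨B, hB, rfl⟩
      · exact (μ.nonempty_of_mem_parts hB).image _
      · exact (ρ.nonempty_of_mem_parts hB).image _)

lemma mem_decode_parts {μ : Finpartition (Finset.univ : Finset (Fin (j - k - 1)))}
    {ρ : Finpartition (Finset.univ : Finset (Fin (n + 2 * k - j + 1)))}
    {P : Finset (Fin (n + k))} :
    P ∈ (decode hk h1 h2 μ ρ).parts ↔
      (∃ B ∈ μ.parts, P = B.image (fM h2)) ∨ ∃ B ∈ ρ.parts, P = B.image (fC hk h1) := by
  simp only [decode, ofCover_parts, Finset.mem_union, Finset.mem_image]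
  constructor
  · rintro (⟨B, hB, rfl⟩ | ⟨B, hB, rfl⟩)
    · exact Or.inl ⟨B, hB, rfl⟩
    · exact Or.inr ⟨B, hB, rfl⟩
  · rintro (⟨B, hB, rfl⟩ | ⟨B, hB, rfl⟩)
    · exact Or.inl ⟨B, hB, rfl⟩
    · exact Or.inr ⟨B, hB, rfl⟩


lemma decode_noncrossing
    {μ : Finpartition (Finset.univ : Finset (Fin (j - k - 1)))}
    {ρ : Finpartition (Finset.univ : Finset (Fin (n + 2 * k - j + 1)))}
    (hμ : IsNonCrossing μ) (hρ : IsNonCrossing ρ) :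
    IsNonCrossing (decode hk h1 h2 μ ρ) := by
  intro P hP Q hQ hPQ a ha c hc b hb d hd hab hbc hcd
  rw [mem_decode_parts] at hP hQ
  rcases hP with ⟨B, hB, rfl⟩ | ⟨B, hB, rfl⟩ <;>
    rcases hQ with ⟨C, hC, rfl⟩ | ⟨C, hC, rfl⟩ <;>
      simp only [Finset.mem_image] at ha hb hc hd
  · obtain ⟨a', ha', rfl⟩ := ha
    obtain ⟨b', hb', rfl⟩ := hb
    obtain ⟨c', hc', rfl⟩ := hc
    obtain ⟨d', hd', rfl⟩ := hd
    have hBC : B ≠ C := fun h => hPQ (by rw [h])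
    exact hμ B hB C hC hBC a' ha' c' hc' b' hb' d' hd'
      ((fM_strictMono h2).lt_iff_lt.mp hab)
      ((fM_strictMono h2).lt_iff_lt.mp hbc)
      ((fM_strictMono h2).lt_iff_lt.mp hcd)
  · -- a, c in middle; b in complement, a < b < c impossible
    obtain ⟨a', ha', rfl⟩ := ha
    obtain ⟨c', hc', rfl⟩ := hc
    obtain ⟨b', hb', rfl⟩ := hb
    have r1 := fM_range h2 a'
    have r2 := fM_range h2 c'
    have r3 := fC_range hk h1 b'
    have l1 : ((fM h2 a' : ℕ)) < (fC hk h1 b' : ℕ) := hab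
    have l2 : ((fC hk h1 b' : ℕ)) < (fM h2 c' : ℕ) := hbc
    omega
  · -- b, d in middle; a, c in complement, b < c < d impossible
    obtain ⟨b', hb', rfl⟩ := hb
    obtain ⟨d', hd', rfl⟩ := hd
    obtain ⟨c', hc', rfl⟩ := hc
    have r1 := fM_range h2 b'
    have r2 := fM_range h2 d'
    have r3 := fC_range hk h1 c'
    have l1 : ((fM h2 b' : ℕ)) < (fC hk h1 c' : ℕ) := hbc
    have l2 : ((fC hk h1 c' : ℕ)) < (fM h2 d' : ℕ) := hcd
    omega
  · obtain ⟨a', ha', rfl⟩ := ha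
    obtain ⟨b', hb', rfl⟩ := hb
    obtain ⟨c', hc', rfl⟩ := hc
    obtain ⟨d', hd', rfl⟩ := hd
    have hBC : B ≠ C := fun h => hPQ (by rw [h])
    exact hρ B hB C hC hBC a' ha' c' hc' b' hb' d' hd'
      ((fC_strictMono hk h1).lt_iff_lt.mp hab)
      ((fC_strictMono hk h1).lt_iff_lt.mp hbc)
      ((fC_strictMono hk h1).lt_iff_lt.mp hcd)

lemma decode_first
    {μ : Finpartition (Finset.univ : Finset (Fin (j - k - 1)))}
    {ρ : Finpartition (Finset.univ : Finset (Fin (n + 2 * k - j + 1)))}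
    (hρ : FirstTogether (k + 1) ρ) :
    FirstTogether k (decode hk h1 h2 μ ρ) := by
  obtain ⟨B, hB, hBf⟩ := hρ
  refine ⟨B.image (fC hk h1), (mem_decode_parts hk h1 h2).mpr (Or.inr ⟨B, hB, rfl⟩), ?_⟩
  intro i hi
  have hik : (i : ℕ) < k ∨ (j - 1 : ℕ) ≤ (i : ℕ) := Or.inl hi
  obtain ⟨t, rfl⟩ := exists_fC hk h1 h2 (i := i) hik
  have htk : (t : ℕ) < k := by
    by_contra h
    have := fC_val_ge hk h1 t (by omega)
    omega
  exact Finset.mem_image_of_mem _ (hBf t (by omega))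

lemma decode_classJ
    {μ : Finpartition (Finset.univ : Finset (Fin (j - k - 1)))}
    {ρ : Finpartition (Finset.univ : Finset (Fin (n + 2 * k - j + 1)))}
    (hρ : FirstTogether (k + 1) ρ) :
    InClassJ k j (decode hk h1 h2 μ ρ) := by
  obtain ⟨B, hB, hBf⟩ := hρ
  refine ⟨B.image (fC hk h1), (mem_decode_parts hk h1 h2).mpr (Or.inr ⟨B, hB, rfl⟩),
    ?_, ⟨by omega, ?_⟩, ?_⟩
  · intro i hi
    have hik : (i : ℕ) < k ∨ (j - 1 : ℕ) ≤ (i : ℕ) := Or.inl hi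
    obtain ⟨t, rfl⟩ := exists_fC hk h1 h2 (i := i) hik
    have htk : (t : ℕ) < k := by
      by_contra h
      have := fC_val_ge hk h1 t (by omega)
      omega
    exact Finset.mem_image_of_mem _ (hBf t (by omega))
  · have hkm : k < n + 2 * k - j + 1 := by omega
    have hmem : (⟨k, hkm⟩ : Fin (n + 2 * k - j + 1)) ∈ B := hBf _ (by simp)
    refine Finset.mem_image.mpr ⟨⟨k, hkm⟩, hmem, ?_⟩
    apply Fin.ext
    have := fC_val_ge hk h1 (⟨k, hkm⟩ : Fin (n + 2 * k - j + 1)) (by simp)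
    simp only [this]
    omega
  · intro i hi hki
    obtain ⟨t, ht, rfl⟩ := Finset.mem_image.mp hi
    rcases fC_range hk h1 t with h | h
    · omega
    · exact h

lemma decode_injective :
    Function.Injective (fun p :
        Finpartition (Finset.univ : Finset (Fin (j - k - 1))) ×
        Finpartition (Finset.univ : Finset (Fin (n + 2 * k - j + 1))) =>
      decode hk h1 h2 p.1 p.2) := by
  rintro ⟨μ, ρ⟩ ⟨μ', ρ'⟩ h
  simp only at h
  have hparts : (decode hk h1 h2 μ ρ).parts = (decode hk h1 h2 μ' ρ').parts := by rw [h]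
  have key : ∀ (σ σ' : Finpartition (Finset.univ : Finset (Fin (j - k - 1))))
      (τ τ' : Finpartition (Finset.univ : Finset (Fin (n + 2 * k - j + 1)))),
      (decode hk h1 h2 σ τ).parts = (decode hk h1 h2 σ' τ').parts →
      ∀ B ∈ σ.parts, B.image (fM h2) ∈ σ'.parts.image (Finset.image (fM h2)) := by
    intro σ σ' τ τ' hp B hB
    have : B.image (fM h2) ∈ (decode hk h1 h2 σ' τ').parts := by
      rw [← hp, mem_decode_parts]
      exact Or.inl ⟨B, hB, rfl⟩
    rw [mem_decode_parts] at this
    rcases this with ⟨C, hC, hBC⟩ | ⟨C, hC, hBC⟩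
    · rw [hBC]; exact Finset.mem_image_of_mem _ hC
    · exfalso
      obtain ⟨b, hb⟩ := σ.nonempty_of_mem_parts hB
      have : fM h2 b ∈ C.image (fC hk h1) := by
        rw [← hBC]; exact Finset.mem_image_of_mem _ hb
      obtain ⟨c, hc, hcb⟩ := Finset.mem_image.mp this
      have r1 := fM_range h2 b
      have r2 := fC_range hk h1 c
      rw [hcb] at r2
      omega
  have keyC : ∀ (σ σ' : Finpartition (Finset.univ : Finset (Fin (j - k - 1))))
      (τ τ' : Finpartition (Finset.univ : Finset (Fin (n + 2 * k - j + 1)))),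
      (decode hk h1 h2 σ τ).parts = (decode hk h1 h2 σ' τ').parts →
      ∀ B ∈ τ.parts, B.image (fC hk h1) ∈ τ'.parts.image (Finset.image (fC hk h1)) := by
    intro σ σ' τ τ' hp B hB
    have : B.image (fC hk h1) ∈ (decode hk h1 h2 σ' τ').parts := by
      rw [← hp, mem_decode_parts]
      exact Or.inr ⟨B, hB, rfl⟩
    rw [mem_decode_parts] at this
    rcases this with ⟨C, hC, hBC⟩ | ⟨C, hC, hBC⟩
    · exfalso
      obtain ⟨b, hb⟩ := τ.nonempty_of_mem_parts hB
      have : fC hk h1 b ∈ C.image (fM h2) := by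
        rw [← hBC]; exact Finset.mem_image_of_mem _ hb
      obtain ⟨c, hc, hcb⟩ := Finset.mem_image.mp this
      have r1 := fC_range hk h1 b
      have r2 := fM_range h2 c
      rw [hcb] at r2
      omega
    · rw [hBC]; exact Finset.mem_image_of_mem _ hC
  have hμ : μ.parts.image (Finset.image (fM h2)) = μ'.parts.image (Finset.image (fM h2)) := by
    apply Finset.Subset.antisymm
    · intro P hP
      obtain ⟨B, hB, rfl⟩ := Finset.mem_image.mp hP
      exact key μ μ' ρ ρ' hparts B hB
    · intro P hP
      obtain ⟨B, hB, rfl⟩ := Finset.mem_image.mp hP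
      exact key μ' μ ρ' ρ hparts.symm B hB
  have hρ : ρ.parts.image (Finset.image (fC hk h1)) =
      ρ'.parts.image (Finset.image (fC hk h1)) := by
    apply Finset.Subset.antisymm
    · intro P hP
      obtain ⟨B, hB, rfl⟩ := Finset.mem_image.mp hP
      exact keyC μ μ' ρ ρ' hparts B hB
    · intro P hP
      obtain ⟨B, hB, rfl⟩ := Finset.mem_image.mp hP
      exact keyC μ' μ ρ' ρ hparts.symm B hB
  have hμp : μ.parts = μ'.parts :=
    Finset.image_injective (Finset.image_injective (fM_inj h2)) hμ
  have hρp : ρ.parts = ρ'.parts :=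
    Finset.image_injective (Finset.image_injective (fC_inj hk h1)) hρ
  exact Prod.ext (finpartition_eq hμp) (finpartition_eq hρp)


lemma decode_surj (ν : Finpartition (Finset.univ : Finset (Fin (n + k))))
    (hNC : IsNonCrossing ν) (hCJ : InClassJ k j ν) :
    ∃ (μ : Finpartition (Finset.univ : Finset (Fin (j - k - 1))))
      (ρ : Finpartition (Finset.univ : Finset (Fin (n + 2 * k - j + 1)))),
      IsNonCrossing μ ∧ IsNonCrossing ρ ∧ FirstTogether (k + 1) ρ ∧
        decode hk h1 h2 μ ρ = ν := by
  classical
  obtain ⟨B, hB, hBf, ⟨hjlt, hjB⟩, hBmin⟩ := hCJ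
  -- every part is either inside the middle interval or disjoint from it
  have dich : ∀ P ∈ ν.parts,
      (∀ i ∈ P, k ≤ (i : ℕ) ∧ (i : ℕ) < j - 1) ∨
      (∀ i ∈ P, (i : ℕ) < k ∨ (j - 1 : ℕ) ≤ (i : ℕ)) := by
    intro P hP
    by_contra hcon
    push_neg at hcon
    obtain ⟨⟨x, hxP, hx⟩, ⟨y, hyP, hy1, hy2⟩⟩ := hcon
    have hy : k ≤ (y : ℕ) ∧ (y : ℕ) < j - 1 := by omega
    have hPB : P ≠ B := by
      rintro rfl
      have := hBmin y hyP hy.1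
      omega
    have hx' : (x : ℕ) < k ∨ (j - 1 : ℕ) ≤ (x : ℕ) := by
      by_cases h : k ≤ (x : ℕ)
      · exact Or.inr (by have := hx h; omega)
      · exact Or.inl (by omega)
    rcases hx' with hxlt | hxge
    · exact hPB (ν.eq_of_mem_parts hP hB hxP (hBf x hxlt))
    · by_cases hxj : (x : ℕ) = j - 1
      · have : x = (⟨j - 1, hjlt⟩ : Fin (n + k)) := Fin.ext hxj
        rw [this] at hxP
        exact hPB (ν.eq_of_mem_parts hP hB hxP hjB)
      · have hxgt : (j - 1 : ℕ) < (x : ℕ) := by omega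
        have hb1 : ((⟨k - 1, by omega⟩ : Fin (n + k))) ∈ B := hBf _ (by simp; omega)
        exact hNC B hB P hP (Ne.symm hPB)
          ⟨k - 1, by omega⟩ hb1 ⟨j - 1, hjlt⟩ hjB y hyP x hxP
          (Fin.lt_def.mpr (by simp; omega))
          (Fin.lt_def.mpr (by simp; omega))
          (Fin.lt_def.mpr (by simp; omega))
  set cond1 : Finset (Fin (n + k)) → Prop :=
    fun P => ∀ i ∈ P, k ≤ (i : ℕ) ∧ (i : ℕ) < j - 1 with hcond1
  set cond2 : Finset (Fin (n + k)) → Prop :=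
    fun P => ∀ i ∈ P, (i : ℕ) < k ∨ (j - 1 : ℕ) ≤ (i : ℕ) with hcond2
  set S1 : Finset (Finset (Fin (j - k - 1))) :=
    (ν.parts.filter cond1).image
      (fun P => P.preimage (fM h2) (fM_inj h2).injOn) with hS1
  set S2 : Finset (Finset (Fin (n + 2 * k - j + 1))) :=
    (ν.parts.filter cond2).image
      (fun P => P.preimage (fC hk h1) (fC_inj hk h1).injOn) with hS2
  have img_pre1 : ∀ P, cond1 P →
      (P.preimage (fM h2) (fM_inj h2).injOn).image (fM h2) = P := by
    intro P hP
    ext i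
    simp only [Finset.mem_image, Finset.mem_preimage]
    constructor
    · rintro ⟨t, ht, rfl⟩; exact ht
    · intro hi
      obtain ⟨t, rfl⟩ := exists_fM h2 (hP i hi)
      exact ⟨t, hi, rfl⟩
  have img_pre2 : ∀ P, cond2 P →
      (P.preimage (fC hk h1) (fC_inj hk h1).injOn).image (fC hk h1) = P := by
    intro P hP
    ext i
    simp only [Finset.mem_image, Finset.mem_preimage]
    constructor
    · rintro ⟨t, ht, rfl⟩; exact ht
    · intro hi
      obtain ⟨t, rfl⟩ := exists_fC hk h1 h2 (i := i) (hP i hi)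
      exact ⟨t, hi, rfl⟩
  -- the partition of the middle interval
  have μdisj : ∀ P ∈ S1, ∀ Q ∈ S1, P ≠ Q → ∀ a, a ∈ P → a ∈ Q → False := by
    intro P hP Q hQ hPQ a haP haQ
    obtain ⟨A, hA, rfl⟩ := Finset.mem_image.mp hP
    obtain ⟨A', hA', rfl⟩ := Finset.mem_image.mp hQ
    rw [Finset.mem_preimage] at haP haQ
    have := ν.eq_of_mem_parts (Finset.mem_filter.mp hA).1 (Finset.mem_filter.mp hA').1 haP haQ
    exact hPQ (by rw [this])
  have μcov : ∀ t : Fin (j - k - 1), ∃ P ∈ S1, t ∈ P := by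
    intro t
    obtain ⟨P, hP, hmem⟩ := ν.exists_mem (Finset.mem_univ (fM h2 t))
    have hc : cond1 P := by
      rcases dich P hP with h | h
      · exact h
      · exfalso
        have := h _ hmem
        have := fM_range h2 t
        omega
    exact ⟨P.preimage (fM h2) (fM_inj h2).injOn,
      Finset.mem_image_of_mem _ (Finset.mem_filter.mpr ⟨hP, hc⟩),
      Finset.mem_preimage.mpr hmem⟩
  have μne : ∀ P ∈ S1, P.Nonempty := by
    intro P hP
    obtain ⟨A, hA, rfl⟩ := Finset.mem_image.mp hP
    obtain ⟨hA', hc⟩ := Finset.mem_filter.mp hA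
    obtain ⟨a, ha⟩ := ν.nonempty_of_mem_parts hA'
    obtain ⟨t, rfl⟩ := exists_fM h2 (hc a ha)
    exact ⟨t, Finset.mem_preimage.mpr ha⟩
  have ρdisj : ∀ P ∈ S2, ∀ Q ∈ S2, P ≠ Q → ∀ a, a ∈ P → a ∈ Q → False := by
    intro P hP Q hQ hPQ a haP haQ
    obtain ⟨A, hA, rfl⟩ := Finset.mem_image.mp hP
    obtain ⟨A', hA', rfl⟩ := Finset.mem_image.mp hQ
    rw [Finset.mem_preimage] at haP haQ
    have := ν.eq_of_mem_parts (Finset.mem_filter.mp hA).1 (Finset.mem_filter.mp hA').1 haP haQ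
    exact hPQ (by rw [this])
  have ρcov : ∀ t : Fin (n + 2 * k - j + 1), ∃ P ∈ S2, t ∈ P := by
    intro t
    obtain ⟨P, hP, hmem⟩ := ν.exists_mem (Finset.mem_univ (fC hk h1 t))
    have hc : cond2 P := by
      rcases dich P hP with h | h
      · exfalso
        have := h _ hmem
        have := fC_range hk h1 t
        omega
      · exact h
    exact ⟨P.preimage (fC hk h1) (fC_inj hk h1).injOn,
      Finset.mem_image_of_mem _ (Finset.mem_filter.mpr ⟨hP, hc⟩),
      Finset.mem_preimage.mpr hmem⟩
  have ρne : ∀ P ∈ S2, P.Nonempty := by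
    intro P hP
    obtain ⟨A, hA, rfl⟩ := Finset.mem_image.mp hP
    obtain ⟨hA', hc⟩ := Finset.mem_filter.mp hA
    obtain ⟨a, ha⟩ := ν.nonempty_of_mem_parts hA'
    obtain ⟨t, rfl⟩ := exists_fC hk h1 h2 (i := a) (hc a ha)
    exact ⟨t, Finset.mem_preimage.mpr ha⟩
  refine ⟨ofCover S1 μdisj μcov μne, ofCover S2 ρdisj ρcov ρne, ?_, ?_, ?_, ?_⟩
  · -- μ noncrossing
    intro P hP Q hQ hPQ a ha c hc b hb d hd l1 l2 l3
    rw [ofCover_parts] at hP hQ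
    obtain ⟨A, hA, rfl⟩ := Finset.mem_image.mp hP
    obtain ⟨A', hA', rfl⟩ := Finset.mem_image.mp hQ
    rw [Finset.mem_preimage] at ha hb hc hd
    have hAA' : A ≠ A' := fun h => hPQ (by rw [h])
    exact hNC A (Finset.mem_filter.mp hA).1 A' (Finset.mem_filter.mp hA').1 hAA'
      (fM h2 a) ha (fM h2 c) hc (fM h2 b) hb (fM h2 d) hd
      (fM_strictMono h2 l1) (fM_strictMono h2 l2) (fM_strictMono h2 l3)
  · -- ρ noncrossing
    intro P hP Q hQ hPQ a ha c hc b hb d hd l1 l2 l3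
    rw [ofCover_parts] at hP hQ
    obtain ⟨A, hA, rfl⟩ := Finset.mem_image.mp hP
    obtain ⟨A', hA', rfl⟩ := Finset.mem_image.mp hQ
    rw [Finset.mem_preimage] at ha hb hc hd
    have hAA' : A ≠ A' := fun h => hPQ (by rw [h])
    exact hNC A (Finset.mem_filter.mp hA).1 A' (Finset.mem_filter.mp hA').1 hAA'
      (fC hk h1 a) ha (fC hk h1 c) hc (fC hk h1 b) hb (fC hk h1 d) hd
      (fC_strictMono hk h1 l1) (fC_strictMono hk h1 l2) (fC_strictMono hk h1 l3)
  · -- ρ has the first k+1 elements together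
    have hcB : cond2 B := by
      intro i hi
      by_cases h : k ≤ (i : ℕ)
      · exact Or.inr (hBmin i hi h)
      · exact Or.inl (by omega)
    refine ⟨B.preimage (fC hk h1) (fC_inj hk h1).injOn,
      (by rw [ofCover_parts]
          exact Finset.mem_image_of_mem _ (Finset.mem_filter.mpr ⟨hB, hcB⟩)), ?_⟩
    intro t ht
    rw [Finset.mem_preimage]
    by_cases htk : (t : ℕ) < k
    · exact hBf _ (by rw [fC_val_lt hk h1 t htk]; exact htk)
    · have htk' : (t : ℕ) = k := by omega
      have : fC hk h1 t = (⟨j - 1, hjlt⟩ : Fin (n + k)) := by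
        apply Fin.ext
        rw [fC_val_ge hk h1 t (by omega)]
        simp
        omega
      rw [this]
      exact hjB
  · -- decode gives back ν
    apply finpartition_eq
    have e1 : S1.image (Finset.image (fM h2)) = ν.parts.filter cond1 := by
      rw [hS1, Finset.image_image]
      rw [show ((Finset.image (fM h2)) ∘ fun P => P.preimage (fM h2) (fM_inj h2).injOn) =
          fun P : Finset (Fin (n + k)) => (P.preimage (fM h2) (fM_inj h2).injOn).image (fM h2)
          from rfl]
      calc (ν.parts.filter cond1).image
            (fun P => (P.preimage (fM h2) (fM_inj h2).injOn).image (fM h2))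
          = (ν.parts.filter cond1).image id := by
            apply Finset.image_congr
            intro P hP
            exact img_pre1 P (Finset.mem_filter.mp hP).2
        _ = ν.parts.filter cond1 := Finset.image_id
    have e2 : S2.image (Finset.image (fC hk h1)) = ν.parts.filter cond2 := by
      rw [hS2, Finset.image_image]
      calc (ν.parts.filter cond2).image
            (fun P => (P.preimage (fC hk h1) (fC_inj hk h1).injOn).image (fC hk h1))
          = (ν.parts.filter cond2).image id := by
            apply Finset.image_congr
            intro P hP
            exact img_pre2 P (Finset.mem_filter.mp hP).2
        _ = ν.parts.filter cond2 := Finset.image_id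
    show S1.image (Finset.image (fM h2)) ∪ S2.image (Finset.image (fC hk h1)) = ν.parts
    rw [e1, e2]
    apply Finset.Subset.antisymm
    · intro P hP
      rcases Finset.mem_union.mp hP with h | h
      · exact (Finset.mem_filter.mp h).1
      · exact (Finset.mem_filter.mp h).1
    · intro P hP
      rcases dich P hP with h | h
      · exact Finset.mem_union_left _ (Finset.mem_filter.mpr ⟨hP, h⟩)
      · exact Finset.mem_union_right _ (Finset.mem_filter.mpr ⟨hP, h⟩)


include hk h1 h2 in
lemma classJ_equiv :
    Nonempty
      ({ν : Finpartition (Finset.univ : Finset (Fin (n + k))) //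
          IsNonCrossing ν ∧ FirstTogether k ν ∧ InClassJ k j ν} ≃
        {ν : Finpartition (Finset.univ : Finset (Fin (j - k - 1))) //
          IsNonCrossing ν} ×
        {ν : Finpartition (Finset.univ : Finset (Fin (n + 2 * k - j + 1))) //
          IsNonCrossing ν ∧ FirstTogether (k + 1) ν}) := by
  let F : ({ν : Finpartition (Finset.univ : Finset (Fin (j - k - 1))) //
          IsNonCrossing ν} ×
        {ν : Finpartition (Finset.univ : Finset (Fin (n + 2 * k - j + 1))) //
          IsNonCrossing ν ∧ FirstTogether (k + 1) ν}) →
      {ν : Finpartition (Finset.univ : Finset (Fin (n + k))) //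
          IsNonCrossing ν ∧ FirstTogether k ν ∧ InClassJ k j ν} :=
    fun p => ⟨decode hk h1 h2 p.1.1 p.2.1,
      decode_noncrossing hk h1 h2 p.1.2 p.2.2.1,
      decode_first hk h1 h2 p.2.2.2,
      decode_classJ hk h1 h2 p.2.2.2⟩
  have hinj : Function.Injective F := by
    intro p q hpq
    have : decode hk h1 h2 p.1.1 p.2.1 = decode hk h1 h2 q.1.1 q.2.1 :=
      congrArg Subtype.val hpq
    have h' := decode_injective hk h1 h2 (a₁ := (p.1.1, p.2.1)) (a₂ := (q.1.1, q.2.1)) this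
    have h1' : p.1.1 = q.1.1 := congrArg Prod.fst h'
    have h2' : p.2.1 = q.2.1 := congrArg Prod.snd h'
    exact Prod.ext (Subtype.ext h1') (Subtype.ext h2')
  have hsurj : Function.Surjective F := by
    rintro ⟨ν, hNC, hFT, hCJ⟩
    obtain ⟨μ, ρ, hμ, hρ, hρf, heq⟩ := decode_surj hk h1 h2 ν hNC hCJ
    exact ⟨(⟨μ, hμ⟩, ⟨ρ, hρ, hρf⟩), Subtype.ext heq⟩
  exact ⟨(Equiv.ofBijective F ⟨hinj, hsurj⟩).symm⟩

end Decode

end Stmt2Aux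


/-- For `n, k ≥ 1` and `j ∈ {k+1, …, n+k}`, the class
`NC^k_j(n+k)` is in bijection with `NC(j−k−1) × NC^{k+1}(n+2k−j+1)`;
moreover `NC^k(n+k)` decomposes into `NC^k_0(n+k)` (partitions in which
`{1,…,k}` is a whole block) together with the classes `NC^k_j(n+k)`,
`j = k+1, …, n+k`, which are pairwise disjoint. -/
theorem stmt2 (n k : ℕ) (hn : 1 ≤ n) (hk : 1 ≤ k) :
    (∀ j : ℕ, k + 1 ≤ j → j ≤ n + k →
      Nonempty
        ({ν : Finpartition (Finset.univ : Finset (Fin (n + k))) //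
            IsNonCrossing ν ∧ FirstTogether k ν ∧ InClassJ k j ν} ≃
          {ν : Finpartition (Finset.univ : Finset (Fin (j - k - 1))) //
            IsNonCrossing ν} ×
          {ν : Finpartition (Finset.univ : Finset (Fin (n + 2 * k - j + 1))) //
            IsNonCrossing ν ∧ FirstTogether (k + 1) ν})) ∧
    (∀ ν : Finpartition (Finset.univ : Finset (Fin (n + k))),
      IsNonCrossing ν → FirstTogether k ν →
        ((Finset.univ.filter (fun i : Fin (n + k) => (i : ℕ) < k) ∈ ν.parts) ↔
            ¬ ∃ j : ℕ, k + 1 ≤ j ∧ j ≤ n + k ∧ InClassJ k j ν) ∧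
        (∀ j j' : ℕ, k + 1 ≤ j → j ≤ n + k → k + 1 ≤ j' → j' ≤ n + k →
            InClassJ k j ν → InClassJ k j' ν → j = j')) := by
  constructor
  · intro j hj1 hj2
    exact Stmt2Aux.classJ_equiv hk hj1 hj2
  · intro ν hNC hFT
    constructor
    · constructor
      · intro hF hex
        obtain ⟨j, hj1, hj2, B, hB, hBf, ⟨hjlt, hjB⟩, hBmin⟩ := hex
        have h0F : (⟨0, by omega⟩ : Fin (n + k)) ∈
            Finset.univ.filter (fun i : Fin (n + k) => (i : ℕ) < k) :=
          Finset.mem_filter.mpr ⟨Finset.mem_univ _, by simp; omega⟩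
        have h0B : (⟨0, by omega⟩ : Fin (n + k)) ∈ B := hBf _ (by simp; omega)
        have hFB := ν.eq_of_mem_parts hF hB h0F h0B
        rw [← hFB] at hjB
        have := (Finset.mem_filter.mp hjB).2
        simp only at this
        omega
      · intro hne
        obtain ⟨B, hB, hBf⟩ := hFT
        by_cases hT : (B.filter (fun i : Fin (n + k) => k ≤ (i : ℕ))).Nonempty
        · exfalso
          apply hne
          set v := (B.filter (fun i : Fin (n + k) => k ≤ (i : ℕ))).min' hT with hv
          have hvmem := Finset.min'_mem (B.filter (fun i : Fin (n + k) => k ≤ (i : ℕ))) hT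
          rw [← hv] at hvmem
          have hvB := (Finset.mem_filter.mp hvmem).1
          have hvk := (Finset.mem_filter.mp hvmem).2
          have hvlt := v.isLt
          refine ⟨(v : ℕ) + 1, by omega, by omega, B, hB, hBf,
            ⟨by simpa using hvlt, ?_⟩, ?_⟩
          · have he : (⟨(v : ℕ) + 1 - 1, by simpa using hvlt⟩ : Fin (n + k)) = v :=
              Fin.ext (by simp)
            rw [he]
            exact hvB
          · intro i hi hki
            have hle : v ≤ i :=
              Finset.min'_le _ i (Finset.mem_filter.mpr ⟨hi, hki⟩)
            have := Fin.le_def.mp hle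
            omega
        · have hBF : B = Finset.univ.filter (fun i : Fin (n + k) => (i : ℕ) < k) := by
            apply Finset.Subset.antisymm
            · intro i hi
              refine Finset.mem_filter.mpr ⟨Finset.mem_univ _, ?_⟩
              by_contra h
              exact hT ⟨i, Finset.mem_filter.mpr ⟨hi, by omega⟩⟩
            · intro i hi
              exact hBf i (Finset.mem_filter.mp hi).2
          rw [← hBF]
          exact hB
    · intro j j' hj1 hj2 hj1' hj2' hCJ hCJ'
      obtain ⟨B, hB, hBf, ⟨hl, hjB⟩, hmin⟩ := hCJ
      obtain ⟨B', hB', hBf', ⟨hl', hjB'⟩, hmin'⟩ := hCJ'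
      have h0 : (⟨0, by omega⟩ : Fin (n + k)) ∈ B := hBf _ (by simp; omega)
      have h0' : (⟨0, by omega⟩ : Fin (n + k)) ∈ B' := hBf' _ (by simp; omega)
      have hBB : B = B' := ν.eq_of_mem_parts hB hB' h0 h0'
      have hjB2 : (⟨j' - 1, hl'⟩ : Fin (n + k)) ∈ B := by rw [hBB]; exact hjB'
      have hjB2' : (⟨j - 1, hl⟩ : Fin (n + k)) ∈ B' := by rw [← hBB]; exact hjB
      have e1 := hmin _ hjB2 (by simp; omega)
      have e2 := hmin' _ hjB2' (by simp; omega)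
      simp only at e1 e2
      omega
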